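/- Let T be a triangulated category with products, G a Σ-stable set of objects generating T (i.e., G^⊥ = 0), and C a Σ-stable set with Ψ(C)^s ⊆ Φ(G) for some s ∈ ℕ*. Then T is the smallest colocalizing subcategory containing C, i.e., T = Coloc(C). -/

import Mathlib

open CategoryTheory CategoryTheory.Limits CategoryTheory.Pretriangulated

universe v u

variable {C : Type u} [Category.{v} C]

def SigmaStable [HasShift C ℤ] (S : Set C) : Prop :=
  ∀ X ∈ S, X⟦(1 : ℤ)⟧ ∈ S ∧ X⟦(-1 : ℤ)⟧ ∈ S

def IsPhantom [Limits.HasZeroMorphisms C] (𝒢 : Set C) {X Y : C} (φ : X ⟶ Y) : Prop :=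
  ∀ G ∈ 𝒢, ∀ f : G ⟶ X, f ≫ φ = 0

def IsCophantom [Limits.HasZeroMorphisms C] (𝒞 : Set C) {X Y : C} (ψ : X ⟶ Y) : Prop :=
  ∀ c ∈ 𝒞, ∀ g : Y ⟶ c, ψ ≫ g = 0

/-- composites of `n+1` maps satisfying `I`: the generators of the ideal `I^{n+1}`. -/
def compPow (I : MorphismProperty C) : ℕ → MorphismProperty C
  | 0 => I
  | n + 1 => fun X Z f => ∃ (Y : C) (g : X ⟶ Y) (h : Y ⟶ Z),
      I g ∧ compPow I n h ∧ f = g ≫ h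

/-- A colocalizing subcategory: a (strictly full) triangulated subcategory closed under
products. -/
structure IsColocalizing [Preadditive C] [HasZeroObject C] [HasShift C ℤ]
    [∀ n : ℤ, (shiftFunctor C n).Additive] [Pretriangulated C] (L : Set C) : Prop where
  zero : ∀ X : C, IsZero X → X ∈ L
  iso_closed : ∀ X Y : C, (X ≅ Y) → X ∈ L → Y ∈ L
  shift : ∀ X ∈ L, X⟦(1 : ℤ)⟧ ∈ L ∧ X⟦(-1 : ℤ)⟧ ∈ L
  ext₂ : ∀ T ∈ (distTriang C), T.obj₁ ∈ L → T.obj₃ ∈ L → T.obj₂ ∈ L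
  products : ∀ (ι : Type (max u v)) (f : ι → C) (_ : HasProduct f),
    (∀ i, f i ∈ L) → (∏ᶜ f) ∈ L

/- AUXILIARY DEVELOPMENT -/
set_option linter.unusedSectionVars false
set_option linter.unusedVariables false
open scoped ZeroObject

section Tower
variable [Preadditive C] [HasZeroObject C] [HasShift C ℤ]
    [∀ n : ℤ, (shiftFunctor C n).Additive] [Pretriangulated C]

variable (L : Set C) (X : C)

structure Pkg where
  fib : C
  dob : C
  u : fib ⟶ X
  v : X ⟶ dob
  w : dob ⟶ fib⟦(1:ℤ)⟧
  mem : dob ∈ L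
  dist : Triangle.mk u v w ∈ distTriang C

variable (𝒞 : Set C)

def CrossProp (p q : Pkg L X) : Prop :=
  ∃ (chi : q.fib ⟶ p.fib) (t : q.dob ⟶ p.dob),
    IsCophantom 𝒞 chi ∧ q.u = chi ≫ p.u ∧ q.v ≫ t = p.v ∧
      t ≫ p.w = q.w ≫ (shiftFunctor C (1:ℤ)).map chi

variable [HasProducts.{max u v} C]

lemma step_exists (hL : IsColocalizing L) (h𝒞L : 𝒞 ⊆ L) (p : Pkg L X) :
    ∃ q : Pkg L X, CrossProp L X 𝒞 p q := by
  classical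
  let I : Type (max u v) := Σ (c : 𝒞), (p.fib ⟶ (c : C))
  let Pfun : I → C := fun σ => (σ.1 : C)
  have hP : (∏ᶜ Pfun) ∈ L := hL.products I Pfun inferInstance (fun σ => h𝒞L σ.1.2)
  set pm : p.fib ⟶ ∏ᶜ Pfun := Pi.lift (fun σ => σ.2) with hpm
  obtain ⟨D', a, m, hT₂⟩ :=
    distinguished_cocone_triangle₂ (p.w ≫ (shiftFunctor C (1:ℤ)).map pm)
  obtain ⟨v', hv'₁, hv'₂⟩ := complete_distinguished_triangle_morphism₂
    (Triangle.mk p.u p.v p.w) (Triangle.mk a m (p.w ≫ (shiftFunctor C (1:ℤ)).map pm))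
    p.dist hT₂ pm (𝟙 p.dob) (by exact (Category.id_comp _).symm)
  change X ⟶ D' at v'
  change p.u ≫ v' = pm ≫ a at hv'₁
  change p.v ≫ 𝟙 p.dob = v' ≫ m at hv'₂
  rw [Category.comp_id] at hv'₂
  -- hv'₁ : p.u ≫ v' = pm ≫ a ; hv'₂ : p.v = v' ≫ m
  obtain ⟨fib', u', w', hT₃⟩ := distinguished_cocone_triangle₁ v'
  obtain ⟨χ₀, hχ₀₁, hχ₀₂⟩ := complete_distinguished_triangle_morphism₁
    (Triangle.mk u' v' w') (Triangle.mk p.u p.v p.w) hT₃ p.dist (𝟙 X) m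
    (by change v' ≫ m = 𝟙 X ≫ p.v; rw [Category.id_comp]; exact hv'₂.symm)
  change fib' ⟶ p.fib at χ₀
  change u' ≫ 𝟙 X = χ₀ ≫ p.u at hχ₀₁
  change w' ≫ (shiftFunctor C (1:ℤ)).map χ₀ = m ≫ p.w at hχ₀₂
  erw [Category.comp_id] at hχ₀₁
  -- hχ₀₁ : u' = χ₀ ≫ p.u ; hχ₀₂ : w' ≫ χ₀⟦1⟧' = m ≫ p.w
  have h12 : u' ≫ v' = 0 := comp_distTriang_mor_zero₁₂ _ hT₃
  have h23 : v' ≫ w' = 0 := comp_distTriang_mor_zero₂₃ _ hT₃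
  have h1 : (χ₀ ≫ pm) ≫ a = 0 := by
    rw [Category.assoc, ← hv'₁, ← Category.assoc, ← hχ₀₁, h12]
  obtain ⟨ζ, hζ⟩ := Triangle.coyoneda_exact₂ _ (inv_rot_of_distTriang _ hT₂) (χ₀ ≫ pm) h1
  change fib' ⟶ (p.dob)⟦(-1:ℤ)⟧ at ζ
  have hfac : (Triangle.mk a m (p.w ≫ (shiftFunctor C (1:ℤ)).map pm)).invRotate.mor₁
      = (Triangle.mk p.u p.v p.w).invRotate.mor₁ ≫ pm := by
    change -(shiftFunctor C (-1:ℤ)).map (p.w ≫ (shiftFunctor C (1:ℤ)).map pm) ≫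
        (shiftFunctorCompIsoId C (1:ℤ) (-1:ℤ) (by omega)).hom.app (∏ᶜ Pfun) =
      (-(shiftFunctor C (-1:ℤ)).map p.w ≫
        (shiftFunctorCompIsoId C (1:ℤ) (-1:ℤ) (by omega)).hom.app p.fib) ≫ pm
    simp only [Functor.map_comp, Preadditive.neg_comp, Category.assoc, neg_inj]
    congr 1
    have := (shiftFunctorCompIsoId C (1:ℤ) (-1:ℤ) (by omega)).hom.naturality pm
    dsimp at this
    exact this
  set wbar : (p.dob)⟦(-1:ℤ)⟧ ⟶ p.fib := (Triangle.mk p.u p.v p.w).invRotate.mor₁ with hwbar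
  have hwbaru : wbar ≫ p.u = 0 :=
    comp_distTriang_mor_zero₁₂ _ (inv_rot_of_distTriang _ p.dist)
  set χ : fib' ⟶ p.fib := χ₀ - ζ ≫ wbar with hχ
  have hχp : χ ≫ pm = 0 := by
    erw [hχ, Preadditive.sub_comp, Category.assoc, ← hfac, ← hζ, sub_self]
  have hχu : χ ≫ p.u = u' := by
    rw [hχ, Preadditive.sub_comp, Category.assoc, hwbaru, comp_zero, sub_zero]
    exact hχ₀₁.symm
  have hcoph : IsCophantom 𝒞 χ := by
    intro c hc g
    have hg : g = pm ≫ Pi.π Pfun ⟨⟨c, hc⟩, g⟩ := by simp [hpm]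
    rw [hg, ← Category.assoc, hχp, zero_comp]
  have hker : (-(shiftFunctor C (1:ℤ)).map (ζ ≫ wbar)) ≫
      (shiftFunctor C (1:ℤ)).map p.u = 0 := by
    rw [Preadditive.neg_comp, ← Functor.map_comp, Category.assoc, hwbaru, comp_zero,
      Functor.map_zero, neg_zero]
  obtain ⟨σm, hσm⟩ := Triangle.coyoneda_exact₁ _ p.dist _ hker
  change (fib')⟦(1:ℤ)⟧ ⟶ p.dob at σm
  change -(shiftFunctor C (1:ℤ)).map (ζ ≫ wbar) = σm ≫ p.w at hσm
  set t : D' ⟶ p.dob := m + w' ≫ σm with ht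
  have hvt : v' ≫ t = p.v := by
    rw [ht, Preadditive.comp_add, ← Category.assoc, h23, zero_comp, add_zero, ← hv'₂]
  have hwt : t ≫ p.w = w' ≫ (shiftFunctor C (1:ℤ)).map χ := by
    rw [ht, Preadditive.add_comp, Category.assoc, ← hσm, ← hχ₀₂, hχ, Functor.map_sub,
      Preadditive.comp_sub, Functor.map_comp, Preadditive.comp_neg, ← Category.assoc]
    abel
  exact ⟨⟨fib', D', u', v', w',
      hL.ext₂ _ hT₂ hP p.mem, hT₃⟩,
    χ, t, hcoph, hχu.symm, hvt, hwt⟩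

end Tower


section Helpers
variable [Preadditive C] [HasZeroObject C] [HasShift C ℤ]
    [∀ n : ℤ, (shiftFunctor C n).Additive] [Pretriangulated C]

lemma shift_comp_zero (G W V : C) (φ : W ⟶ V) (y : G ⟶ W⟦(1:ℤ)⟧)
    (h : ∀ (f : G⟦(-1:ℤ)⟧ ⟶ W), f ≫ φ = 0) :
    y ≫ (shiftFunctor C (1:ℤ)).map φ = 0 := by
  set adj := (shiftEquiv' C (-1:ℤ) (1:ℤ) (by omega)).toAdjunction with hadj
  have h1 : y ≫ (shiftFunctor C (1:ℤ)).map φ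
      = (adj.homEquiv G V) ((adj.homEquiv G W).symm y ≫ φ) := by
    rw [Adjunction.homEquiv_naturality_right]
    erw [(adj.homEquiv G W).apply_symm_apply y]
    rfl
  rw [h1]
  erw [h _, Adjunction.homEquiv_unit]
  simp
  erw [Functor.map_zero, comp_zero]
  rfl

lemma surj_transport (H PD : C) (m : PD ⟶ PD)
    (hs : ∀ z : H⟦(1:ℤ)⟧ ⟶ PD, ∃ z', z' ≫ m = z) :
    ∀ e : H ⟶ PD⟦(-1:ℤ)⟧, ∃ e', e' ≫ (shiftFunctor C (-1:ℤ)).map m = e := by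
  intro e
  set adj := (shiftEquiv' C (1:ℤ) (-1:ℤ) (by omega)).toAdjunction with hadj
  obtain ⟨z', hz⟩ := hs ((adj.homEquiv H PD).symm e)
  refine ⟨(adj.homEquiv H PD) z', ?_⟩
  have := adj.homEquiv_naturality_right z' m
  erw [← this, hz]
  exact (adj.homEquiv H PD).apply_symm_apply e
lemma shift_cancel_zero (G W V : C) (φ : W ⟶ V) (y : G ⟶ W⟦(1:ℤ)⟧)
    (hy : y ≫ (shiftFunctor C (1:ℤ)).map φ = 0)
    (h : ∀ f : G⟦(-1:ℤ)⟧ ⟶ W, f ≫ φ = 0 → f = 0) : y = 0 := by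
  set adj := (shiftEquiv' C (-1:ℤ) (1:ℤ) (by omega)).toAdjunction with hadj
  have h1 : y ≫ (shiftFunctor C (1:ℤ)).map φ
      = (adj.homEquiv G V) ((adj.homEquiv G W).symm y ≫ φ) := by
    rw [Adjunction.homEquiv_naturality_right]
    erw [(adj.homEquiv G W).apply_symm_apply y]
    rfl
  have h2 : (adj.homEquiv G W).symm y ≫ φ = 0 := by
    apply (adj.homEquiv G V).injective
    rw [← h1, hy, Adjunction.homEquiv_unit]
    simp
    rfl
  have h3 : (adj.homEquiv G W).symm y = 0 := h _ h2
  have h4 := (adj.homEquiv G W).apply_symm_apply y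
  rw [← h4, h3, Adjunction.homEquiv_unit]
  simp
  rfl

end Helpers

section Tower2
variable [Preadditive C] [HasZeroObject C] [HasShift C ℤ]
    [∀ n : ℤ, (shiftFunctor C n).Additive] [Pretriangulated C]
variable [HasProducts.{max u v} C]

structure TowerData (𝒞 L : Set C) (X : C) where
  pk : ℕ → Pkg L X
  chi : ∀ n, (pk (n+1)).fib ⟶ (pk n).fib
  t : ∀ n, (pk (n+1)).dob ⟶ (pk n).dob
  coph : ∀ n, IsCophantom 𝒞 (chi n)
  hu : ∀ n, (pk (n+1)).u = chi n ≫ (pk n).u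
  hv : ∀ n, (pk (n+1)).v ≫ t n = (pk n).v
  hw : ∀ n, t n ≫ (pk n).w = (pk (n+1)).w ≫ (shiftFunctor C (1:ℤ)).map (chi n)

lemma towerData_exists (𝒞 L : Set C) (X : C) (hL : IsColocalizing L) (h𝒞L : 𝒞 ⊆ L) :
    Nonempty (TowerData 𝒞 L X) := by
  classical
  let base : Pkg L X :=
    ⟨X, 0, 𝟙 X, 0, 0, hL.zero _ (Limits.isZero_zero C), contractible_distinguished X⟩
  let tw : ℕ → Pkg L X :=
    fun n => Nat.rec base (fun _ p => (step_exists L X 𝒞 hL h𝒞L p).choose) n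
  have htw : ∀ n, CrossProp L X 𝒞 (tw n) (tw (n+1)) :=
    fun n => (step_exists L X 𝒞 hL h𝒞L (tw n)).choose_spec
  exact ⟨⟨tw, fun n => (htw n).choose, fun n => (htw n).choose_spec.choose,
    fun n => (htw n).choose_spec.choose_spec.1,
    fun n => (htw n).choose_spec.choose_spec.2.1,
    fun n => (htw n).choose_spec.choose_spec.2.2.1,
    fun n => (htw n).choose_spec.choose_spec.2.2.2⟩⟩

namespace TowerData
variable {𝒞 L : Set C} {X : C} (T : TowerData 𝒞 L X)

def xchain (n : ℕ) : ∀ (k : ℕ), (T.pk (n+k)).fib ⟶ (T.pk n).fib :=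
  fun k => Nat.rec (𝟙 _) (fun k ih => T.chi (n+k) ≫ ih) k

@[simp] lemma xchain_zero (n : ℕ) : T.xchain n 0 = 𝟙 _ := rfl
lemma xchain_succ (n k : ℕ) : T.xchain n (k+1) = T.chi (n+k) ≫ T.xchain n k := rfl

def dchain (n : ℕ) : ∀ (k : ℕ), (T.pk (n+k)).dob ⟶ (T.pk n).dob :=
  fun k => Nat.rec (𝟙 _) (fun k ih => T.t (n+k) ≫ ih) k

@[simp] lemma dchain_zero (n : ℕ) : T.dchain n 0 = 𝟙 _ := rfl
lemma dchain_succ (n k : ℕ) : T.dchain n (k+1) = T.t (n+k) ≫ T.dchain n k := rfl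

lemma u_eq : ∀ (k n : ℕ), (T.pk (n+k)).u = T.xchain n k ≫ (T.pk n).u
  | 0, n => by simp
  | (k+1), n => by
      rw [T.xchain_succ, Category.assoc, ← u_eq k n]
      exact T.hu (n+k)

lemma v_dchain : ∀ (k n : ℕ), (T.pk (n+k)).v ≫ T.dchain n k = (T.pk n).v
  | 0, n => by simp
  | (k+1), n => by
      rw [T.dchain_succ, ← Category.assoc]
      rw [show (T.pk (n+(k+1))).v ≫ T.t (n+k) = (T.pk (n+k)).v from T.hv (n+k)]
      exact v_dchain k n

lemma dchain_w : ∀ (k n : ℕ), T.dchain n k ≫ (T.pk n).w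
    = (T.pk (n+k)).w ≫ (shiftFunctor C (1:ℤ)).map (T.xchain n k)
  | 0, n => by simp
  | (k+1), n => by
      rw [T.dchain_succ, Category.assoc, dchain_w k n, ← Category.assoc]
      rw [show T.t (n+k) ≫ (T.pk (n+k)).w
          = (T.pk (n+(k+1))).w ≫ (shiftFunctor C (1:ℤ)).map (T.chi (n+k)) from T.hw (n+k)]
      rw [Category.assoc, ← Functor.map_comp, T.xchain_succ]

lemma xchain_coph : ∀ (k n : ℕ), IsCophantom 𝒞 (T.xchain n (k+1))
  | 0, n => by
      intro c hc g
      rw [T.xchain_succ, T.xchain_zero, Category.comp_id]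
      exact T.coph n c hc g
  | (k+1), n => by
      intro c hc g
      rw [T.xchain_succ n (k+1), Category.assoc, xchain_coph k n c hc g, comp_zero]

lemma xchain_pow : ∀ (j n k : ℕ),
    compPow (fun _ _ ψ => IsCophantom 𝒞 ψ) j (T.xchain n (k+(j+1)))
  | 0, n, k => T.xchain_coph k n
  | (j+1), n, k =>
      ⟨_, T.chi (n+(k+(j+1))), T.xchain n (k+(j+1)), T.coph _, xchain_pow j n k,
        T.xchain_succ n (k+(j+1))⟩

end TowerData
end Tower2

section Tower3
variable [Preadditive C] [HasZeroObject C] [HasShift C ℤ]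
    [∀ n : ℤ, (shiftFunctor C n).Additive] [Pretriangulated C]
variable [HasProducts.{max u v} C]

namespace TowerData
variable {𝒞 L : Set C} {X : C} (T : TowerData 𝒞 L X)

/-- apply `k` transition maps at the far end of a family of elements -/
def Phi (H : C) (k : ℕ) : (∀ m, H ⟶ (T.pk m).dob) → ∀ n : ℕ, (H ⟶ (T.pk n).dob) :=
  Nat.rec (motive := fun _ => (∀ m, H ⟶ (T.pk m).dob) → ∀ n : ℕ, (H ⟶ (T.pk n).dob))
    (fun c n => c n) (fun _ ih c n => ih (fun m => c (m+1) ≫ T.t m) n) k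

@[simp] lemma Phi_zero (H : C) (c) (n : ℕ) : T.Phi H 0 c n = c n := rfl
lemma Phi_succ (H : C) (k : ℕ) (c) (n : ℕ) :
    T.Phi H (k+1) c n = T.Phi H k (fun m => c (m+1) ≫ T.t m) n := rfl

lemma Phi_peel (H : C) : ∀ (k : ℕ) (c) (n : ℕ),
    T.Phi H k c (n+1) ≫ T.t n = T.Phi H (k+1) c n
  | 0, c, n => rfl
  | (k+1), c, n => Phi_peel H k (fun m => c (m+1) ≫ T.t m) n

lemma Phi_eq_dchain (H : C) : ∀ (k : ℕ) (c) (n : ℕ),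
    T.Phi H k c n = c (n+k) ≫ T.dchain n k
  | 0, c, n => by simp
  | (k+1), c, n => by
      rw [T.Phi_succ, Phi_eq_dchain H k _ n, T.dchain_succ, ← Category.assoc]
      rfl

end TowerData

section Main
variable {𝒞 𝒢 L : Set C} {X : C} {s' : ℕ}

lemma xchain_phantom
    (hPow' : ∀ ⦃A B : C⦄ (f : A ⟶ B),
      compPow (fun _ _ ψ => IsCophantom 𝒞 ψ) s' f → IsPhantom 𝒢 f)
    (T : TowerData 𝒞 L X) (n k : ℕ) (hk : s'+1 ≤ k) : IsPhantom 𝒢 (T.xchain n k) := by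
  obtain ⟨k', rfl⟩ : ∃ k', k = k'+(s'+1) := ⟨k-(s'+1), by omega⟩
  exact hPow' _ (T.xchain_pow s' n k')

/-- `z ≫ dchain n k ≫ w n = 0` when `k ≥ s` -/
lemma dchain_w_vanish (h𝒢 : SigmaStable 𝒢)
    (hPow' : ∀ ⦃A B : C⦄ (f : A ⟶ B),
      compPow (fun _ _ ψ => IsCophantom 𝒞 ψ) s' f → IsPhantom 𝒢 f)
    (T : TowerData 𝒞 L X) (H : C) (hH : H ∈ 𝒢) (n k : ℕ) (hk : s'+1 ≤ k)
    (z : H ⟶ (T.pk (n+k)).dob) :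
    (z ≫ T.dchain n k) ≫ (T.pk n).w = 0 := by
  rw [Category.assoc, T.dchain_w, ← Category.assoc]
  refine shift_comp_zero H _ _ (T.xchain n k) (z ≫ (T.pk (n+k)).w) (fun f => ?_)
  exact xchain_phantom hPow' T n k hk _ ((h𝒢 H hH).2) f

variable [HasProducts.{max u v} C]

abbrev Dfun (T : TowerData 𝒞 L X) : ULift.{max u v} ℕ → C :=
  fun i => (T.pk i.down).dob

noncomputable def PD (T : TowerData 𝒞 L X) : C := ∏ᶜ (Dfun T)

noncomputable def Smap (T : TowerData 𝒞 L X) : PD T ⟶ PD T :=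
  Pi.lift (fun i => Pi.π (Dfun T) ⟨i.down+1⟩ ≫ T.t i.down)

noncomputable def oneS (T : TowerData 𝒞 L X) : PD T ⟶ PD T := 𝟙 _ - Smap T

lemma comp_oneS_π (T : TowerData 𝒞 L X) {H : C} (x : H ⟶ PD T) (n : ℕ) :
    (x ≫ oneS T) ≫ Pi.π (Dfun T) ⟨n⟩
      = x ≫ Pi.π (Dfun T) ⟨n⟩ - (x ≫ Pi.π (Dfun T) ⟨n+1⟩) ≫ T.t n := by
  change (x ≫ (𝟙 (∏ᶜ Dfun T) - Pi.lift (fun i => Pi.π (Dfun T) ⟨i.down+1⟩ ≫ T.t i.down))) ≫ Pi.π (Dfun T) ⟨n⟩ = _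
  simp [Preadditive.sub_comp, Preadditive.comp_sub]
  erw [Preadditive.sub_comp, Category.id_comp, Pi.lift_π, Preadditive.comp_sub, Category.assoc]
  rfl

/-- surjectivity of `(1 - S)` on `Hom(H, ∏ D_n)` for `H ∈ 𝒢` -/
lemma lemA (h𝒢 : SigmaStable 𝒢)
    (hPow' : ∀ ⦃A B : C⦄ (f : A ⟶ B),
      compPow (fun _ _ ψ => IsCophantom 𝒞 ψ) s' f → IsPhantom 𝒢 f)
    (T : TowerData 𝒞 L X) (H : C) (hH : H ∈ 𝒢) (y : H ⟶ PD T) :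
    ∃ x : H ⟶ PD T, x ≫ oneS T = y := by
  classical
  set c : ∀ m, H ⟶ (T.pk m).dob := fun m => y ≫ Pi.π (Dfun T) ⟨m⟩ with hc
  have hβ : ∀ n, ∃ β : H ⟶ X, T.Phi H (s'+1) c n = β ≫ (T.pk n).v := by
    intro n
    have h0 : T.Phi H (s'+1) c n ≫ (T.pk n).w = 0 := by
      rw [T.Phi_eq_dchain]
      exact dchain_w_vanish h𝒢 hPow' T H hH n (s'+1) le_rfl _
    exact Triangle.coyoneda_exact₃ _ (T.pk n).dist _ h0
  choose β hβ using hβ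
  obtain ⟨b, hb0, hbsucc⟩ : ∃ b : ℕ → (H ⟶ X), b 0 = 0 ∧ ∀ n, b (n+1) = b n - β n :=
    ⟨fun n => Nat.rec 0 (fun m bm => bm - β m) n, rfl, fun n => rfl⟩
  have hbs : ∀ n, b n - b (n+1) = β n := by
    intro n
    rw [hbsucc n]
    abel
  obtain ⟨xe, hxe⟩ : ∃ xe : ∀ n : ℕ, H ⟶ (T.pk n).dob, ∀ n, xe n
      = (∑ k ∈ Finset.range (s'+1), T.Phi H k c n) + b n ≫ (T.pk n).v :=
    ⟨fun n => (∑ k ∈ Finset.range (s'+1), T.Phi H k c n) + b n ≫ (T.pk n).v,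
      fun n => rfl⟩
  have key : ∀ n, xe n - (xe (n+1)) ≫ T.t n = c n := by
    intro n
    have e1 : (xe (n+1)) ≫ T.t n
        = (∑ k ∈ Finset.range (s'+1), T.Phi H (k+1) c n) + b (n+1) ≫ (T.pk n).v := by
      rw [hxe (n+1), Preadditive.add_comp, Preadditive.sum_comp, Category.assoc, T.hv n]
      exact congrArg₂ (· + ·) (Finset.sum_congr rfl (fun k _ => T.Phi_peel H k c n)) rfl
    have e2 : (∑ k ∈ Finset.range (s'+1), T.Phi H k c n)
          - (∑ k ∈ Finset.range (s'+1), T.Phi H (k+1) c n)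
        = c n - T.Phi H (s'+1) c n := by
      rw [← Finset.sum_sub_distrib, Finset.sum_range_sub' (fun k => T.Phi H k c n) (s'+1)]
      simp
    calc xe n - (xe (n+1)) ≫ T.t n
        = ((∑ k ∈ Finset.range (s'+1), T.Phi H k c n)
            - (∑ k ∈ Finset.range (s'+1), T.Phi H (k+1) c n))
          + (b n - b (n+1)) ≫ (T.pk n).v := by
          rw [e1, hxe n, Preadditive.sub_comp]; abel
      _ = (c n - T.Phi H (s'+1) c n) + β n ≫ (T.pk n).v := by rw [e2, hbs n]
      _ = c n := by rw [← hβ n]; abel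
  refine ⟨Pi.lift (fun i => xe i.down), ?_⟩
  apply Limits.Pi.hom_ext
  intro i
  obtain ⟨n⟩ := i
  erw [comp_oneS_π]
  erw [Pi.lift_π, Pi.lift_π]
  exact key n

/-- elements of the kernel of `(1-S)` come from `X` -/
lemma lemB (h𝒢 : SigmaStable 𝒢)
    (hPow' : ∀ ⦃A B : C⦄ (f : A ⟶ B),
      compPow (fun _ _ ψ => IsCophantom 𝒞 ψ) s' f → IsPhantom 𝒢 f)
    (T : TowerData 𝒞 L X) (H : C) (hH : H ∈ 𝒢) (y : H ⟶ PD T)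
    (hy : y ≫ oneS T = 0) :
    ∃ f : H ⟶ X, ∀ n, f ≫ (T.pk n).v = y ≫ Pi.π (Dfun T) ⟨n⟩ := by
  classical
  set c : ∀ m, H ⟶ (T.pk m).dob := fun m => y ≫ Pi.π (Dfun T) ⟨m⟩ with hc
  have hcompat : ∀ n, c (n+1) ≫ T.t n = c n := by
    intro n
    have := congrArg (fun (q : H ⟶ PD T) => q ≫ Pi.π (Dfun T) ⟨n⟩) hy
    erw [comp_oneS_π] at this
    erw [zero_comp] at this
    have h2 := sub_eq_zero.mp this
    exact h2.symm
  have hck : ∀ (k n : ℕ), c (n+k) ≫ T.dchain n k = c n := by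
    intro k
    induction k with
    | zero => intro n; simp
    | succ k ih =>
        intro n
        rw [T.dchain_succ, ← Category.assoc]
        rw [show c (n+(k+1)) ≫ T.t (n+k) = c (n+k) from hcompat (n+k)]
        exact ih n
  have hf : ∀ n, ∃ fn : H ⟶ X, c n = fn ≫ (T.pk n).v := by
    intro n
    have h0 : c n ≫ (T.pk n).w = 0 := by
      rw [← hck (s'+1) n]
      exact dchain_w_vanish h𝒢 hPow' T H hH n (s'+1) le_rfl _
    exact Triangle.coyoneda_exact₃ _ (T.pk n).dist _ h0
  choose f hfv using hf
  have hfv1 : ∀ n, f (n+1) ≫ (T.pk n).v = c n := by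
    intro n
    rw [show (T.pk n).v = (T.pk (n+1)).v ≫ T.t n from (T.hv n).symm, ← Category.assoc,
      ← hfv (n+1)]
    exact hcompat n
  have hstep : ∀ n, ∃ a : H ⟶ (T.pk n).fib, f (n+1) - f n = a ≫ (T.pk n).u := by
    intro n
    have h0 : (f (n+1) - f n) ≫ (T.pk n).v = 0 := by
      rw [Preadditive.sub_comp, hfv1 n, ← hfv n, sub_self]
    exact Triangle.coyoneda_exact₂ _ (T.pk n).dist _ h0
  choose a ha using hstep
  have hstab : ∀ m, s'+1 ≤ m → f (m+1) = f m := by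
    intro m hm
    obtain ⟨k, rfl⟩ : ∃ k, m = k+(s'+1) := ⟨m-(s'+1), by omega⟩
    have : f (k+(s'+1)+1) - f (k+(s'+1)) = 0 := by
      rw [ha (k+(s'+1)), T.u_eq (s'+1) k, ← Category.assoc,
        xchain_phantom hPow' T k (s'+1) le_rfl H hH _, zero_comp]
    rw [sub_eq_zero] at this
    exact this
  have hconst : ∀ m, s'+1 ≤ m → f m = f (s'+1) := by
    intro m hm
    induction m with
    | zero => omega
    | succ m ih =>
        rcases Nat.lt_or_ge m (s'+1) with h | h
        · have : m + 1 = s' + 1 := by omega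
          rw [this]
        · rw [hstab m h]; exact ih h
  have hclaim : ∀ (k n : ℕ), f (n+k+1) ≫ (T.pk n).v = c n := by
    intro k
    induction k with
    | zero => intro n; exact hfv1 n
    | succ k ih =>
        intro n
        have e : f (n+k+1+1) = f (n+k+1) + a (n+k+1) ≫ (T.pk (n+k+1)).u := by
          have hd := ha (n+k+1)
          rw [sub_eq_iff_eq_add] at hd
          rw [hd]; abel
        have h12 : (T.pk n).u ≫ (T.pk n).v = 0 :=
          comp_distTriang_mor_zero₁₂ _ (T.pk n).dist
        have huv : (T.pk (n+k+1)).u ≫ (T.pk n).v = 0 := by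
          rw [show (T.pk (n+k+1)).u = T.xchain n (k+1) ≫ (T.pk n).u from T.u_eq (k+1) n,
            Category.assoc, h12, comp_zero]
        calc f (n+(k+1)+1) ≫ (T.pk n).v
            = (f (n+k+1) + a (n+k+1) ≫ (T.pk (n+k+1)).u) ≫ (T.pk n).v := by
              rw [← e]; rfl
          _ = f (n+k+1) ≫ (T.pk n).v
              + a (n+k+1) ≫ ((T.pk (n+k+1)).u ≫ (T.pk n).v) := by
              rw [Preadditive.add_comp, Category.assoc]
          _ = c n := by rw [ih n, huv, comp_zero, add_zero]
  refine ⟨f (s'+1), fun n => ?_⟩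
  rcases Nat.lt_or_ge n (s'+1) with h | h
  · obtain ⟨k, hk⟩ : ∃ k, s'+1 = n+k+1 := ⟨s'-n, by omega⟩
    rw [hk]
    exact hclaim k n
  · have h1 : f (s'+1) = f (n+1) := (hconst (n+1) (by omega)).symm
    rw [h1]
    exact hfv1 n

end Main
end Tower3


/-- If a Σ-stable set `𝒢` generates `T`, and `𝒞` is a Σ-stable set with
`Ψ(𝒞)^s ⊆ Φ(𝒢)` for some `s ≥ 1`, then `T = Coloc 𝒞`, i.e. every object of `T` lies
in every colocalizing subcategory containing `𝒞`. -/
theorem stmt11 [Preadditive C] [HasZeroObject C] [HasShift C ℤ]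
    [∀ n : ℤ, (shiftFunctor C n).Additive] [Pretriangulated C]
    [HasProducts.{max u v} C]
    (𝒞 𝒢 : Set C) (h𝒞 : SigmaStable 𝒞) (h𝒢 : SigmaStable 𝒢)
    (hgen : ∀ X : C, (∀ G ∈ 𝒢, ∀ f : G ⟶ X, f = 0) → IsZero X)
    (s : ℕ) (hs : 1 ≤ s)
    (hPow : ∀ ⦃X Y : C⦄ (f : X ⟶ Y),
      compPow (fun _ _ ψ => IsCophantom 𝒞 ψ) (s - 1) f → IsPhantom 𝒢 f) :
    ∀ (L : Set C), IsColocalizing L → 𝒞 ⊆ L → ∀ X : C, X ∈ L := by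
  obtain ⟨s', rfl⟩ : ∃ s', s = s' + 1 := ⟨s - 1, by omega⟩
  have hPow' : ∀ ⦃A B : C⦄ (f : A ⟶ B),
      compPow (fun _ _ ψ => IsCophantom 𝒞 ψ) s' f → IsPhantom 𝒢 f := by
    simpa using hPow
  intro L hL h𝒞L X
  obtain ⟨T⟩ := towerData_exists 𝒞 L X hL h𝒞L
  -- the homotopy limit triangle
  obtain ⟨Λo, lam, nu, hΛ⟩ := distinguished_cocone_triangle₁ (oneS T)
  have hPDmem : PD T ∈ L := hL.products _ (Dfun T) inferInstance (fun i => (T.pk i.down).mem)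
  have hΛ1mem : (Λo)⟦(1:ℤ)⟧ ∈ L := by
    have h2 := rot_of_distTriang _ (rot_of_distTriang _ hΛ)
    exact hL.ext₂ _ h2 hPDmem (hL.shift _ hPDmem).1
  have hΛmem : Λo ∈ L := by
    refine hL.iso_closed _ _
      ((shiftEquiv' C (1:ℤ) (-1:ℤ) (by omega)).unitIso.app Λo).symm
      ((hL.shift _ hΛ1mem).2)
  -- the comparison map κ
  have hvcomp : Pi.lift (fun (i : ULift.{max u v} ℕ) => (T.pk i.down).v) ≫ oneS T = 0 := by
    apply Limits.Pi.hom_ext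
    intro i
    obtain ⟨n⟩ := i
    erw [comp_oneS_π]
    erw [Pi.lift_π, Pi.lift_π, zero_comp]
    simp [T.hv n]
  obtain ⟨κ', hκ'⟩ := Triangle.coyoneda_exact₂ _ hΛ
    (Pi.lift (fun (i : ULift.{max u v} ℕ) => (T.pk i.down).v)) hvcomp
  let κ : X ⟶ Λo := κ'
  have hκ : (Pi.lift (fun (i : ULift.{max u v} ℕ) => (T.pk i.down).v)) = κ ≫ lam := hκ'
  clear hκ' 
  -- injectivity
  have hinj : ∀ (H : C), H ∈ 𝒢 → ∀ f : H ⟶ X, f ≫ κ = 0 → f = 0 := by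
    intro H hH f hf
    have h1 : f ≫ Pi.lift (fun (i : ULift.{max u v} ℕ) => (T.pk i.down).v) = 0 := by
      erw [hκ, ← Category.assoc, hf, zero_comp]
    have hn : f ≫ (T.pk (0+(s'+1))).v = 0 := by
      have h2 : f ≫ (T.pk (0+(s'+1))).v
          = (f ≫ Pi.lift (fun (i : ULift.{max u v} ℕ) => (T.pk i.down).v)) ≫ Pi.π (Dfun T) ⟨0+(s'+1)⟩ := by
        simp
      rw [h2, h1, zero_comp]
    obtain ⟨g, hg⟩ := Triangle.coyoneda_exact₂ _ (T.pk (0+(s'+1))).dist f hn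
    have hgg : f = g ≫ (T.pk (0+(s'+1))).u := hg
    erw [hgg, T.u_eq (s'+1) 0, ← Category.assoc,
      xchain_phantom hPow' T 0 (s'+1) le_rfl H hH g, zero_comp]
  -- surjectivity
  have hsurj : ∀ (H : C), H ∈ 𝒢 → ∀ h : H ⟶ Λo, ∃ f : H ⟶ X, f ≫ κ = h := by
    intro H hH h
    have hl12 : lam ≫ oneS T = 0 := comp_distTriang_mor_zero₁₂ _ hΛ
    have hker : (h ≫ lam) ≫ oneS T = 0 := by
      rw [Category.assoc, hl12, comp_zero]
    obtain ⟨f, hf⟩ := lemB h𝒢 hPow' T H hH (h ≫ lam) hker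
    have h1 : f ≫ κ ≫ lam = h ≫ lam := by
      rw [← hκ]
      apply Limits.Pi.hom_ext
      intro i
      obtain ⟨n⟩ := i
      erw [Category.assoc]
      simp only [Pi.lift_π]
      exact hf n
    have h2 : (f ≫ κ - h) ≫ lam = 0 := by
      rw [Preadditive.sub_comp, Category.assoc, h1, sub_self]
    obtain ⟨e, he⟩ := Triangle.coyoneda_exact₂ _ (inv_rot_of_distTriang _ hΛ) (f ≫ κ - h) h2
    obtain ⟨e', he'⟩ := surj_transport H (PD T) (oneS T)
      (fun z => lemA h𝒢 hPow' T (H⟦(1:ℤ)⟧) (h𝒢 H hH).1 z) e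
    have h23 : oneS T ≫ nu = 0 := comp_distTriang_mor_zero₂₃ _ hΛ
    have hkill : (shiftFunctor C (-1:ℤ)).map (oneS T)
        ≫ (Triangle.mk lam (oneS T) nu).invRotate.mor₁ = 0 := by
      dsimp [Triangle.invRotate]
      have h0 : (shiftFunctor C (-1:ℤ)).map (oneS T) ≫ (shiftFunctor C (-1:ℤ)).map nu = 0 := by
        rw [← Functor.map_comp, h23, Functor.map_zero]
      exact (Preadditive.comp_neg _ _).trans (neg_eq_zero.mpr ((Category.assoc _ _ _).symm.trans
        ((congrArg (· ≫ _) h0).trans zero_comp)))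
    have h3 : f ≫ κ - h = 0 := by
      erw [he, ← he', Category.assoc, hkill, comp_zero]
      rfl
    exact ⟨f, sub_eq_zero.mp h3⟩
  -- the cone of κ vanishes
  obtain ⟨Z, k2, k3, hK⟩ := distinguished_cocone_triangle κ
  have hZ : IsZero Z := by
    refine hgen Z (fun H hH x => ?_)
    have h31 : k3 ≫ (shiftFunctor C (1:ℤ)).map κ = 0 := comp_distTriang_mor_zero₃₁ _ hK
    have hx3 : x ≫ k3 = 0 := by
      refine shift_cancel_zero H X Λo κ (x ≫ k3) ?_ (fun g hg => hinj _ (h𝒢 H hH).2 g hg)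
      rw [Category.assoc, h31, comp_zero]
    obtain ⟨ℓ, hℓ⟩ := Triangle.coyoneda_exact₃ _ hK x hx3
    have hℓ' : x = ℓ ≫ k2 := hℓ
    obtain ⟨f, hf⟩ := hsurj H hH ℓ
    have h12 : κ ≫ k2 = 0 := comp_distTriang_mor_zero₁₂ _ hK
    erw [hℓ', ← hf, Category.assoc, h12, comp_zero]
  have : IsIso κ := (Triangle.isZero₃_iff_isIso₁ _ hK).1 hZ
  exact hL.iso_closed Λo X (asIso κ).symm hΛmem
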